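/- Let A be a commutative ℚ-algebra with derivation d : A → A, and let z, z̄ ∈ A[w,w⁻¹] satisfy the string equation {z, z̄} = 1. Define Q := (1/2)·( c₋₁(z̄·∂_w z) − c₋₁(z·∂_w z̄) ) ∈ A. Then d(Q) = 1; i.e., the Casimir Q (the area variable of the Laplacian growth problem) grows linearly with unit speed in the variable x. -/

import Mathlib

open LaurentPolynomial

/-- The derivation `d : A → A` extended coefficientwise to Laurent polynomials
(so that `d w = 0`). -/
noncomputable def dmap {A : Type*} [CommRing A] (d : A → A) (f : LaurentPolynomial A) :
    LaurentPolynomial A :=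
  f.coeff.sum fun n a => C (d a) * T n

/-- The formal derivative `∂_w` on Laurent polynomials. -/
noncomputable def wderiv {A : Type*} [CommRing A] (f : LaurentPolynomial A) :
    LaurentPolynomial A :=
  f.coeff.sum fun n a => C (n • a) * T (n - 1)

/-- The Lax–Poisson bracket `{f,g} = w·(∂_w f)·(d g) − w·(d f)·(∂_w g)`. -/
noncomputable def lax {A : Type*} [CommRing A] (d : A → A) (f g : LaurentPolynomial A) :
    LaurentPolynomial A :=
  T 1 * wderiv f * dmap d g - T 1 * dmap d f * wderiv g

section Aux

variable {A : Type*} [CommRing A]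

lemma lp_add_apply (f g : LaurentPolynomial A) (n : ℤ) :
    (f + g).coeff n = f.coeff n + g.coeff n := rfl

lemma lp_sub_apply (f g : LaurentPolynomial A) (n : ℤ) :
    (f - g).coeff n = f.coeff n - g.coeff n := rfl

lemma mono_mul (a b : A) (m n : ℤ) :
    (C a * T m) * (C b * T n) = C (a * b) * T (m + n) := by
  rw [← single_eq_C_mul_T, ← single_eq_C_mul_T, ← single_eq_C_mul_T,
    AddMonoidAlgebra.single_mul_single]

variable (d : A → A) (hd_add : ∀ a b : A, d (a + b) = d a + d b)

section

include hd_add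

lemma hd_zero : d 0 = 0 := by
  have h : d 0 + d 0 = d 0 + 0 := by rw [add_zero, ← hd_add, add_zero]
  exact add_left_cancel h

lemma hd_zsmul (n : ℤ) (a : A) : d (n • a) = n • d a :=
  map_zsmul (AddMonoidHom.mk' d hd_add) n a

lemma dmap_single (a : A) (n : ℤ) : dmap d (C a * T n) = C (d a) * T n := by
  rw [dmap, ← single_eq_C_mul_T, AddMonoidAlgebra.coeff_single, Finsupp.sum_single_index]
  rw [hd_zero d hd_add, map_zero, zero_mul]

lemma dmap_add (f g : LaurentPolynomial A) :
    dmap d (f + g) = dmap d f + dmap d g := by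
  unfold dmap
  rw [AddMonoidAlgebra.coeff_add, Finsupp.sum_add_index]
  · intro n _
    rw [hd_zero d hd_add, map_zero, zero_mul]
  · intro n _ a b
    rw [hd_add, map_add, add_mul]

end

lemma wderiv_single (a : A) (n : ℤ) :
    wderiv (C a * T n) = C (n • a) * T (n - 1) := by
  rw [wderiv, ← single_eq_C_mul_T, AddMonoidAlgebra.coeff_single, Finsupp.sum_single_index]
  rw [smul_zero, map_zero, zero_mul]

lemma wderiv_add (f g : LaurentPolynomial A) :
    wderiv (f + g) = wderiv f + wderiv g := by
  unfold wderiv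
  rw [AddMonoidAlgebra.coeff_add, Finsupp.sum_add_index]
  · intro n _
    rw [smul_zero, map_zero, zero_mul]
  · intro n _ a b
    rw [smul_add, map_add, add_mul]

include hd_add in
lemma dmap_mul (hd_mul : ∀ a b : A, d (a * b) = a * d b + d a * b)
    (f g : LaurentPolynomial A) :
    dmap d (f * g) = f * dmap d g + dmap d f * g := by
  induction f using LaurentPolynomial.induction_on' with
  | add p q hp hq =>
    rw [add_mul, dmap_add d hd_add, hp, hq, dmap_add d hd_add]
    ring
  | C_mul_T m a =>
    induction g using LaurentPolynomial.induction_on' with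
    | add p q hp hq =>
      rw [mul_add, dmap_add d hd_add, hp, hq, dmap_add d hd_add]
      ring
    | C_mul_T n b =>
      rw [mono_mul, dmap_single d hd_add, dmap_single d hd_add,
        dmap_single d hd_add, mono_mul, mono_mul, hd_mul, map_add, add_mul]

lemma wderiv_mul (f g : LaurentPolynomial A) :
    wderiv (f * g) = f * wderiv g + wderiv f * g := by
  induction f using LaurentPolynomial.induction_on' with
  | add p q hp hq =>
    rw [add_mul, wderiv_add, hp, hq, wderiv_add]
    ring
  | C_mul_T m a =>
    induction g using LaurentPolynomial.induction_on' with
    | add p q hp hq =>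
      rw [mul_add, wderiv_add, hp, hq, wderiv_add]
      ring
    | C_mul_T n b =>
      rw [mono_mul, wderiv_single, wderiv_single, wderiv_single, mono_mul, mono_mul]
      have h1 : m + (n - 1) = m + n - 1 := by ring
      have h2 : m - 1 + n = m + n - 1 := by ring
      rw [h1, h2, ← add_mul, ← map_add, mul_smul_comm, smul_mul_assoc, ← add_smul,
        add_comm n m]

include hd_add in
lemma dmap_wderiv (f : LaurentPolynomial A) :
    dmap d (wderiv f) = wderiv (dmap d f) := by
  induction f using LaurentPolynomial.induction_on' with
  | add p q hp hq =>
    rw [wderiv_add, dmap_add d hd_add, hp, hq, dmap_add d hd_add, wderiv_add]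
  | C_mul_T n a =>
    rw [wderiv_single, dmap_single d hd_add, dmap_single d hd_add, wderiv_single,
      hd_zsmul d hd_add]

lemma wderiv_res (f : LaurentPolynomial A) : (wderiv f).coeff (-1 : ℤ) = 0 := by
  induction f using LaurentPolynomial.induction_on' with
  | add p q hp hq =>
    rw [wderiv_add, lp_add_apply, hp, hq, add_zero]
  | C_mul_T n a =>
    rw [wderiv_single, ← single_eq_C_mul_T, AddMonoidAlgebra.coeff_single, Finsupp.single_apply]
    split_ifs with h
    · obtain rfl : n = 0 := by omega
      simp
    · rfl

include hd_add in
lemma dmap_coeff (f : LaurentPolynomial A) (n : ℤ) :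
    (dmap d f).coeff n = d (f.coeff n) := by
  induction f using LaurentPolynomial.induction_on' with
  | add p q hp hq =>
    rw [dmap_add d hd_add, lp_add_apply, hp, hq, lp_add_apply, hd_add]
  | C_mul_T m a =>
    rw [dmap_single d hd_add, ← single_eq_C_mul_T, ← single_eq_C_mul_T,
      AddMonoidAlgebra.coeff_single, AddMonoidAlgebra.coeff_single, Finsupp.single_apply, Finsupp.single_apply]
    split_ifs with h
    · rfl
    · rw [hd_zero d hd_add]

/-- residue of a total derivative vanishes, integration by parts -/
lemma res_parts (f g : LaurentPolynomial A) :
    (f * wderiv g).coeff (-1 : ℤ) = - ((wderiv f * g).coeff (-1 : ℤ)) := by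
  have h := wderiv_res (f * g)
  rw [wderiv_mul, lp_add_apply] at h
  linear_combination h
  
end Aux

/-- if `{z, z̄} = 1` then the Casimir
`Q = (1/2)(c₋₁(z̄·∂_w z) − c₋₁(z·∂_w z̄))` satisfies `d Q = 1`, i.e. the area
variable of the Laplacian growth problem grows with unit speed in `x`. -/
theorem casimir_unit_speed {A : Type*} [CommRing A] [Algebra ℚ A]
    (d : A → A)
    (hd_add : ∀ a b : A, d (a + b) = d a + d b)
    (hd_mul : ∀ a b : A, d (a * b) = a * d b + d a * b)
    (z zbar : LaurentPolynomial A)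
    (hstring : lax d z zbar = 1)
    (Q : A)
    (hQ : Q = (1/2 : ℚ) • ((zbar * wderiv z).coeff (-1 : ℤ) - (z * wderiv zbar).coeff (-1 : ℤ))) :
    d Q = 1 := by
  set z' := wderiv z with hz'
  set w' := wderiv zbar with hw'
  set dz := dmap d z with hdz
  set dzb := dmap d zbar with hdzb
  -- from the string equation, extract the residue identity
  have hfact : (T 1 : LaurentPolynomial A) * (z' * dzb - dz * w') = 1 := by
    rw [mul_sub, ← hstring, lax]
    ring
  have hX : z' * dzb - dz * w' = T (-1 : ℤ) := by
    have h1 : (T (-1 : ℤ) : LaurentPolynomial A) * (T 1 * (z' * dzb - dz * w'))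
        = T (-1 : ℤ) * 1 := by rw [hfact]
    rw [← mul_assoc, ← T_add] at h1
    norm_num [T_zero] at h1
    exact h1
  have key : (z' * dzb).coeff (-1 : ℤ) - (dz * w').coeff (-1 : ℤ) = 1 := by
    have hX' : z' * dzb = T (-1 : ℤ) + dz * w' := by rw [← hX]; ring
    have h1 := congrArg (fun p : LaurentPolynomial A => p.coeff (-1 : ℤ)) hX'
    simp only [lp_add_apply] at h1
    have hT : (T (-1 : ℤ) : LaurentPolynomial A).coeff (-1 : ℤ) = 1 := by
      show (AddMonoidAlgebra.single (-1 : ℤ) (1 : A)).coeff (-1 : ℤ) = 1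
      simp
    rw [h1, hT]
    ring
  -- d of the residues
  have hda : d ((zbar * z').coeff (-1 : ℤ)) =
      - ((w' * dz).coeff (-1 : ℤ)) + (dzb * z').coeff (-1 : ℤ) := by
    rw [← dmap_coeff d hd_add, dmap_mul d hd_add hd_mul, lp_add_apply,
      hz', dmap_wderiv d hd_add, ← hdz, ← hdzb, res_parts, ← hw']
  have hdb : d ((z * w').coeff (-1 : ℤ)) =
      - ((z' * dzb).coeff (-1 : ℤ)) + (dz * w').coeff (-1 : ℤ) := by
    rw [← dmap_coeff d hd_add, dmap_mul d hd_add hd_mul, lp_add_apply,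
      hw', dmap_wderiv d hd_add, ← hdz, ← hdzb, res_parts, ← hz']
  -- assemble
  have hsub : ∀ a b : A, d (a - b) = d a - d b := by
    intro a b
    have h0 := hd_zero d hd_add
    have hneg : d (-b) = - d b := by
      have := hd_add b (-b)
      rw [add_neg_cancel, h0] at this
      linear_combination -this
    rw [sub_eq_add_neg, hd_add, hneg, sub_eq_add_neg]
  have hrat : ∀ (q : ℚ) (x : A), d (q • x) = q • d x := by
    intro q x
    exact map_rat_smul (AddMonoidHom.mk' d hd_add) q x
  rw [hQ, hrat, hsub, hda, hdb]
  have hcomm1 : (dzb * z').coeff (-1 : ℤ) = (z' * dzb).coeff (-1 : ℤ) := by rw [mul_comm]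
  have hcomm2 : (w' * dz).coeff (-1 : ℤ) = (dz * w').coeff (-1 : ℤ) := by rw [mul_comm]
  rw [hcomm1, hcomm2]
  have : - (dz * w').coeff (-1 : ℤ) + (z' * dzb).coeff (-1 : ℤ) -
      (- (z' * dzb).coeff (-1 : ℤ) + (dz * w').coeff (-1 : ℤ)) = (2 : A) := by
    linear_combination 2 * key
  rw [this]
  have h2 : (2 : A) = (2 : ℚ) • (1 : A) := by
    rw [Algebra.smul_def, mul_one, map_ofNat]
  rw [h2, smul_smul]
  norm_num
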